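/- Fix real numbers 0 < δ < η and a nonzero c ∈ ℂ. For b ∈ ℂ define g_b : ℂ² → ℂ² by g_b(z, w) = h_b(e^{cz} − 1, e^{cw} − 1), where h_b(z, w) = (z² + b w, z). Then there exists a constant C > 0, depending only on δ, η and c, such that for every b with δ < |b| ≤ η and every (z, w) in the open unit ball of ℂ², the derivative g_b'(z, w) is invertible and ‖g_b'(z, w)‖ · ‖g_b'(z, w)⁻¹‖ ≤ C. -/

import Mathlib

open Metric

/-- The composition `g_b = h_b ∘ (e^{cz} - 1, e^{cw} - 1)` of the Hénon map
`h_b(z,w) = (z² + b w, z)` with the exponential map, as a self-map of `ℂ²`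
(realized as `EuclideanSpace ℂ (Fin 2)`). -/
noncomputable def henonExpMap (c b : ℂ) :
    EuclideanSpace ℂ (Fin 2) → EuclideanSpace ℂ (Fin 2) := fun p =>
  (EuclideanSpace.equiv (Fin 2) ℂ).symm
    ![(Complex.exp (c * p 0) - 1) ^ 2 + b * (Complex.exp (c * p 1) - 1),
      Complex.exp (c * p 0) - 1]

noncomputable def clm2 (a b d e : ℂ) :
    EuclideanSpace ℂ (Fin 2) →L[ℂ] EuclideanSpace ℂ (Fin 2) :=
  LinearMap.toContinuousLinearMap
  { toFun := fun x => (EuclideanSpace.equiv (Fin 2) ℂ).symm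
      ![a * x 0 + b * x 1, d * x 0 + e * x 1]
    map_add' := by
      intro x y
      apply PiLp.ext
      intro i
      fin_cases i <;> simp <;> ring
    map_smul' := by
      intro s x
      apply PiLp.ext
      intro i
      fin_cases i <;> simp <;> ring }

@[simp] lemma clm2_apply_zero (a b d e : ℂ) (x : EuclideanSpace ℂ (Fin 2)) :
    clm2 a b d e x 0 = a * x 0 + b * x 1 := rfl

@[simp] lemma clm2_apply_one (a b d e : ℂ) (x : EuclideanSpace ℂ (Fin 2)) :
    clm2 a b d e x 1 = d * x 0 + e * x 1 := rfl

lemma euclid_coord_le (x : EuclideanSpace ℂ (Fin 2)) (i : Fin 2) :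
    ‖x i‖ ≤ ‖x‖ := by
  rw [EuclideanSpace.norm_eq]
  have : ‖x i‖ = Real.sqrt (‖x i‖ ^ 2) := by
    rw [Real.sqrt_sq (norm_nonneg _)]
  rw [this]
  apply Real.sqrt_le_sqrt
  rw [Fin.sum_univ_two]
  fin_cases i <;> simp <;> positivity

lemma euclid_norm_le (y : EuclideanSpace ℂ (Fin 2)) :
    ‖y‖ ≤ ‖y 0‖ + ‖y 1‖ := by
  rw [EuclideanSpace.norm_eq, Fin.sum_univ_two]
  have h : Real.sqrt ((‖y 0‖ + ‖y 1‖) ^ 2)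
      = ‖y 0‖ + ‖y 1‖ := by
    rw [Real.sqrt_sq (by positivity)]
  rw [← h]
  apply Real.sqrt_le_sqrt
  have h0 := norm_nonneg (y 0)
  have h1 := norm_nonneg (y 1)
  nlinarith

lemma clm2_norm_le (a b d e : ℂ) :
    ‖clm2 a b d e‖ ≤ ‖a‖ + ‖b‖ + ‖d‖ + ‖e‖ := by
  apply ContinuousLinearMap.opNorm_le_bound
  · positivity
  intro x
  calc ‖clm2 a b d e x‖ ≤ ‖clm2 a b d e x 0‖ + ‖clm2 a b d e x 1‖ :=
        euclid_norm_le _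
    _ ≤ (‖a‖ + ‖b‖ + ‖d‖ + ‖e‖) * ‖x‖ := by
        rw [clm2_apply_zero, clm2_apply_one]
        have h0 := euclid_coord_le x 0
        have h1 := euclid_coord_le x 1
        have n0 := norm_nonneg (x 0)
        have n1 := norm_nonneg (x 1)
        have na := norm_nonneg a
        have nb := norm_nonneg b
        have nd := norm_nonneg d
        have ne' := norm_nonneg e
        calc ‖a * x 0 + b * x 1‖ + ‖d * x 0 + e * x 1‖
            ≤ (‖a‖ * ‖x 0‖ + ‖b‖ * ‖x 1‖)
              + (‖d‖ * ‖x 0‖ + ‖e‖ * ‖x 1‖) := by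
              gcongr <;> [skip; skip] <;>
                refine (norm_add_le _ _).trans (by rw [norm_mul, norm_mul])
          _ ≤ _ := by nlinarith [norm_nonneg x]

lemma henon_hasFDerivAt (c b : ℂ) (p : EuclideanSpace ℂ (Fin 2)) :
    HasFDerivAt (henonExpMap c b)
      (clm2 (2 * (Complex.exp (c * p 0) - 1) * c * Complex.exp (c * p 0))
        (b * c * Complex.exp (c * p 1))
        (c * Complex.exp (c * p 0)) 0) p := by
  -- coordinate projections
  set E0 := Complex.exp (c * p 0) with hE0
  set E1 := Complex.exp (c * p 1) with hE1
  have hproj0 : HasFDerivAt (fun q : EuclideanSpace ℂ (Fin 2) => q 0)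
      (EuclideanSpace.proj (𝕜 := ℂ) (0 : Fin 2)) p :=
    (EuclideanSpace.proj (𝕜 := ℂ) (0 : Fin 2)).hasFDerivAt
  have hproj1 : HasFDerivAt (fun q : EuclideanSpace ℂ (Fin 2) => q 1)
      (EuclideanSpace.proj (𝕜 := ℂ) (1 : Fin 2)) p :=
    (EuclideanSpace.proj (𝕜 := ℂ) (1 : Fin 2)).hasFDerivAt
  have h0 : HasFDerivAt (fun q : EuclideanSpace ℂ (Fin 2) => Complex.exp (c * q 0) - 1)
      ((E0 : ℂ) • (c • EuclideanSpace.proj (𝕜 := ℂ) (0 : Fin 2))) p := by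
    have hmul : HasFDerivAt (fun q : EuclideanSpace ℂ (Fin 2) => c * q 0)
        (c • EuclideanSpace.proj (𝕜 := ℂ) (0 : Fin 2)) p := hproj0.const_mul c
    have hexp := (Complex.hasDerivAt_exp (c * p 0)).comp_hasFDerivAt p hmul
    exact hexp.sub_const 1
  have h1 : HasFDerivAt (fun q : EuclideanSpace ℂ (Fin 2) => Complex.exp (c * q 1) - 1)
      ((E1 : ℂ) • (c • EuclideanSpace.proj (𝕜 := ℂ) (1 : Fin 2))) p := by
    have hmul : HasFDerivAt (fun q : EuclideanSpace ℂ (Fin 2) => c * q 1)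
        (c • EuclideanSpace.proj (𝕜 := ℂ) (1 : Fin 2)) p := hproj1.const_mul c
    have hexp := (Complex.hasDerivAt_exp (c * p 1)).comp_hasFDerivAt p hmul
    exact hexp.sub_const 1
  -- coordinate functions of the target
  have hF0 : HasFDerivAt
      (fun q : EuclideanSpace ℂ (Fin 2) =>
        (Complex.exp (c * q 0) - 1) ^ 2 + b * (Complex.exp (c * q 1) - 1))
      ((E0 - 1) • ((E0 : ℂ) • (c • EuclideanSpace.proj (𝕜 := ℂ) (0 : Fin 2)))
        + (E0 - 1) • ((E0 : ℂ) • (c • EuclideanSpace.proj (𝕜 := ℂ) (0 : Fin 2)))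
        + b • ((E1 : ℂ) • (c • EuclideanSpace.proj (𝕜 := ℂ) (1 : Fin 2)))) p := by
    have hsq := h0.mul h0
    have hb : HasFDerivAt (fun q : EuclideanSpace ℂ (Fin 2) =>
        b * (Complex.exp (c * q 1) - 1))
        (b • ((E1 : ℂ) • (c • EuclideanSpace.proj (𝕜 := ℂ) (1 : Fin 2)))) p := by
      have := h1.const_mul b
      simpa [smul_smul] using this
    have := hsq.add hb
    simp only [pow_two]
    convert this using 2
    all_goals rfl
  have hF1 : HasFDerivAt
      (fun q : EuclideanSpace ℂ (Fin 2) => Complex.exp (c * q 0) - 1)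
      ((E0 : ℂ) • (c • EuclideanSpace.proj (𝕜 := ℂ) (0 : Fin 2))) p := h0
  -- assemble into the Pi-valued map
  set D0 := (E0 - 1) • ((E0 : ℂ) • (c • EuclideanSpace.proj (𝕜 := ℂ) (0 : Fin 2)))
        + (E0 - 1) • ((E0 : ℂ) • (c • EuclideanSpace.proj (𝕜 := ℂ) (0 : Fin 2)))
        + b • ((E1 : ℂ) • (c • EuclideanSpace.proj (𝕜 := ℂ) (1 : Fin 2))) with hD0
  set D1 := (E0 : ℂ) • (c • EuclideanSpace.proj (𝕜 := ℂ) (0 : Fin 2)) with hD1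
  have hG : HasFDerivAt
      (fun q : EuclideanSpace ℂ (Fin 2) =>
        (![(Complex.exp (c * q 0) - 1) ^ 2 + b * (Complex.exp (c * q 1) - 1),
          Complex.exp (c * q 0) - 1] : Fin 2 → ℂ))
      (ContinuousLinearMap.pi ![D0, D1]) p := by
    apply hasFDerivAt_pi''
    intro i
    fin_cases i
    · simpa using hF0
    · simpa using hF1
  have hiso := (EuclideanSpace.equiv (Fin 2) ℂ).symm.comp_hasFDerivAt_iff (f := fun q : EuclideanSpace ℂ (Fin 2) =>
        (![(Complex.exp (c * q 0) - 1) ^ 2 + b * (Complex.exp (c * q 1) - 1),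
          Complex.exp (c * q 0) - 1] : Fin 2 → ℂ)) (x := p)
      (f' := ContinuousLinearMap.pi ![D0, D1])
  have hfull : HasFDerivAt (henonExpMap c b)
      (((EuclideanSpace.equiv (Fin 2) ℂ).symm :
          (Fin 2 → ℂ) →L[ℂ] EuclideanSpace ℂ (Fin 2)).comp
        (ContinuousLinearMap.pi ![D0, D1])) p := by
    exact hiso.2 hG
  convert hfull using 1
  apply ContinuousLinearMap.ext
  intro x
  apply PiLp.ext
  intro i
  fin_cases i <;>
    simp [clm2, D0, D1, ContinuousLinearMap.pi_apply, smul_eq_mul] <;> ring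

lemma clm2_mul (a b d e a' b' d' e' : ℂ) :
    clm2 a b d e * clm2 a' b' d' e' =
      clm2 (a * a' + b * d') (a * b' + b * e') (d * a' + e * d') (d * b' + e * e') := by
  apply ContinuousLinearMap.ext
  intro x
  apply PiLp.ext
  intro i
  fin_cases i <;>
    simp [ContinuousLinearMap.mul_apply] <;> ring

lemma clm2_one : clm2 1 0 0 1 = (1 : EuclideanSpace ℂ (Fin 2) →L[ℂ] EuclideanSpace ℂ (Fin 2)) := by
  apply ContinuousLinearMap.ext
  intro x
  apply PiLp.ext
  intro i
  fin_cases i <;> simp [ContinuousLinearMap.one_apply]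

/-- **Example 3.2.** For `δ < |b| ≤ η` and `c ≠ 0`, the family
`g_b(z,w) = h_b(e^{cz} - 1, e^{cw} - 1)` of composed Hénon maps satisfies, on the open
unit ball of `ℂ²`, a uniform distortion bound `‖g_b'(z,w)‖ ⬝ ‖g_b'(z,w)⁻¹‖ ≤ C` with `C`
depending only on `δ, η, c`. -/
theorem henon_family_satisfies_distortion_bound (δ η : ℝ) (hδ : 0 < δ) (hδη : δ < η)
    (c : ℂ) (hc : c ≠ 0) :
    ∃ C : ℝ, 0 < C ∧ ∀ b : ℂ, δ < ‖b‖ → ‖b‖ ≤ η →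
      ∀ p ∈ ball (0 : EuclideanSpace ℂ (Fin 2)) 1,
        IsUnit (fderiv ℂ (henonExpMap c b) p) ∧
        ‖fderiv ℂ (henonExpMap c b) p‖ * ‖Ring.inverse (fderiv ℂ (henonExpMap c b) p)‖ ≤ C := by
  have hcabs : 0 < ‖c‖ := norm_pos_iff.mpr hc
  set K := Real.exp (‖c‖) with hK
  have hKpos : 0 < K := Real.exp_pos _
  have hηpos : 0 < η := hδ.trans hδη
  set M : ℝ := 2 * (K + 1) * ‖c‖ * K + η * ‖c‖ * K + ‖c‖ * K
    with hM
  set N : ℝ := (‖c‖ * K⁻¹)⁻¹ + (δ * ‖c‖ * K⁻¹)⁻¹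
      + 2 * (K + 1) * ‖c‖ * K / (δ * ‖c‖ * K⁻¹ * (‖c‖ * K⁻¹))
    with hN
  have hMpos : 0 < M := by positivity
  have hNpos : 0 < N := by positivity
  refine ⟨M * N, by positivity, ?_⟩
  intro b hbδ hbη p hp
  set E0 := Complex.exp (c * p 0) with hE0
  set E1 := Complex.exp (c * p 1) with hE1
  have hb0 : b ≠ 0 := by
    intro h
    rw [h] at hbδ
    simp at hbδ
    linarith
  have hE0ne : E0 ≠ 0 := Complex.exp_ne_zero _
  have hE1ne : E1 ≠ 0 := Complex.exp_ne_zero _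
  -- coordinate bounds on the ball
  have hpnorm : ‖p‖ < 1 := by simpa using mem_ball_zero_iff.1 hp
  have hp0 : ‖p 0‖ ≤ 1 := (euclid_coord_le p 0).trans hpnorm.le
  have hp1 : ‖p 1‖ ≤ 1 := (euclid_coord_le p 1).trans hpnorm.le
  -- bounds for the exponentials
  have habs_exp : ∀ i : Fin 2, ‖p i‖ ≤ 1 →
      K⁻¹ ≤ ‖Complex.exp (c * p i)‖ ∧
        ‖Complex.exp (c * p i)‖ ≤ K := by
    intro i hpi
    have habs : ‖c * p i‖ ≤ ‖c‖ := by
      rw [norm_mul]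
      calc ‖c‖ * ‖p i‖ ≤ ‖c‖ * 1 := by gcongr
        _ = ‖c‖ := mul_one _
    have hre := Complex.abs_re_le_norm (c * p i)
    have hre1 : -(‖c * p i‖) ≤ (c * p i).re := (abs_le.mp hre).1
    have hre2 : (c * p i).re ≤ ‖c * p i‖ := (abs_le.mp hre).2
    rw [Complex.norm_exp]
    constructor
    · rw [← Real.exp_neg]
      apply Real.exp_le_exp.2
      linarith
    · apply Real.exp_le_exp.2
      linarith
  have hE0low : K⁻¹ ≤ ‖E0‖ := by rw [hE0]; exact (habs_exp 0 hp0).1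
  have hE0up : ‖E0‖ ≤ K := by rw [hE0]; exact (habs_exp 0 hp0).2
  have hE1low : K⁻¹ ≤ ‖E1‖ := by rw [hE1]; exact (habs_exp 1 hp1).1
  have hE1up : ‖E1‖ ≤ K := by rw [hE1]; exact (habs_exp 1 hp1).2
  -- the derivative and its inverse
  set a := 2 * (E0 - 1) * c * E0 with ha
  set bb := b * c * E1 with hbb
  set d := c * E0 with hd
  have hdne : d ≠ 0 := mul_ne_zero hc hE0ne
  have hbbne : bb ≠ 0 := mul_ne_zero (mul_ne_zero hb0 hc) hE1ne
  set A := clm2 a bb d 0 with hA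
  set B := clm2 0 d⁻¹ bb⁻¹ (-(a / (bb * d))) with hB
  have hderiv : HasFDerivAt (henonExpMap c b) A p := henon_hasFDerivAt c b p
  have hfd : fderiv ℂ (henonExpMap c b) p = A := hderiv.fderiv
  have hAB : A * B = 1 := by
    rw [hA, hB, clm2_mul, ← clm2_one]
    congr 1 <;> field_simp <;> ring
  have hBA : B * A = 1 := by
    rw [hA, hB, clm2_mul, ← clm2_one]
    congr 1 <;> field_simp <;> ring
  have hunit : IsUnit A := ⟨⟨A, B, hAB, hBA⟩, rfl⟩
  have hinv : Ring.inverse A = B := by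
    have : Ring.inverse ((⟨A, B, hAB, hBA⟩ : (EuclideanSpace ℂ (Fin 2) →L[ℂ]
        EuclideanSpace ℂ (Fin 2))ˣ) : EuclideanSpace ℂ (Fin 2) →L[ℂ]
        EuclideanSpace ℂ (Fin 2)) = ↑(⟨A, B, hAB, hBA⟩ : (EuclideanSpace ℂ (Fin 2) →L[ℂ]
        EuclideanSpace ℂ (Fin 2))ˣ)⁻¹ := Ring.inverse_unit _
    simpa using this
  rw [hfd, hinv]
  refine ⟨hunit, ?_⟩
  -- norm bounds
  have hdlow : ‖c‖ * K⁻¹ ≤ ‖d‖ := by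
    rw [hd, norm_mul]
    gcongr
  have hbblow : δ * ‖c‖ * K⁻¹ ≤ ‖bb‖ := by
    rw [hbb, norm_mul, norm_mul]
    gcongr
  have hdup : ‖d‖ ≤ ‖c‖ * K := by
    rw [hd, norm_mul]
    gcongr
  have hbbup : ‖bb‖ ≤ η * ‖c‖ * K := by
    rw [hbb, norm_mul, norm_mul]
    gcongr
  have haup : ‖a‖ ≤ 2 * (K + 1) * ‖c‖ * K := by
    rw [ha, norm_mul, norm_mul, norm_mul, Complex.norm_two]
    have h1 : ‖E0 - 1‖ ≤ K + 1 := by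
      calc ‖E0 - 1‖ ≤ ‖E0‖ + ‖(-1 : ℂ)‖ := by
            simpa [sub_eq_add_neg] using norm_add_le E0 (-1)
        _ ≤ K + 1 := by
            rw [norm_neg, norm_one]
            gcongr
    gcongr
  have hnormA : ‖A‖ ≤ M := by
    refine (clm2_norm_le a bb d 0).trans ?_
    rw [hM]
    simp only [norm_zero, add_zero]
    gcongr
  have hnormB : ‖B‖ ≤ N := by
    refine (clm2_norm_le 0 d⁻¹ bb⁻¹ (-(a / (bb * d)))).trans ?_
    rw [hN]
    simp only [norm_zero, norm_neg, norm_inv, zero_add]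
    gcongr ?_ + ?_ + ?_
    · exact inv_anti₀ (by positivity) hdlow
    · exact inv_anti₀ (by positivity) hbblow
    · rw [norm_div]
      have hden : δ * ‖c‖ * K⁻¹ * (‖c‖ * K⁻¹) ≤ ‖bb * d‖ := by
        rw [norm_mul]
        gcongr
      exact div_le_div₀ (by positivity) haup (by positivity) hden
  exact mul_le_mul hnormA hnormB (norm_nonneg _) hMpos.le
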